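/- Let M be a full-rank submodule of F[x]^q. If G = {g_1, ..., g_m} is a minimal Gröbner basis of M with respect to the top ordering with degrees ℓ_1, ..., ℓ_m and G̃ = {g̃_1, ..., g̃_m} is a minimal Gröbner basis of M with respect to the pot ordering with degrees ℓ̃_1, ..., ℓ̃_m, then ℓ_1 + ... + ℓ_m = ℓ̃_1 + ... + ℓ̃_m. -/

import Mathlib

open Polynomial

open scoped Classical

/-- Support of a polynomial vector: monomials `(degree, position)` ordered lexicographically,
which is the term-over-position (top) ordering. -/
noncomputable def vsupp {R : Type*} [CommRing R] {q : ℕ} (f : Fin q → R[X]) :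
    Finset (Lex (ℕ × Fin q)) :=
  Finset.univ.biUnion fun i => (f i).support.image fun α => toLex (α, i)

/-- Leading monomial w.r.t. the top ordering (`⊥` for the zero vector). -/
noncomputable def vlm {R : Type*} [CommRing R] {q : ℕ} (f : Fin q → R[X]) :
    WithBot (Lex (ℕ × Fin q)) := (vsupp f).max

/-- Degree of the leading monomial (junk value `0` for the zero vector). -/
noncomputable def vdeg {R : Type*} [CommRing R] {q : ℕ} (f : Fin q → R[X]) : ℕ :=
  ((vlm f).map fun m => (ofLex m).1).unbotD 0

/-- Leading position. -/
noncomputable def vlpos {R : Type*} [CommRing R] {q : ℕ} (f : Fin q → R[X]) : WithBot (Fin q) :=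
  (vlm f).map fun m => (ofLex m).2

/-- Leading coefficient. -/
noncomputable def vlc {R : Type*} [CommRing R] {q : ℕ} (f : Fin q → R[X]) : R :=
  ((vlm f).map fun m => (f (ofLex m).2).coeff (ofLex m).1).unbotD 0

/-- Leading term of a polynomial vector, as a polynomial vector. -/
noncomputable def vlt {R : Type*} [CommRing R] {q : ℕ} (f : Fin q → R[X]) : Fin q → R[X] :=
  ((vlm f).map fun m => fun j : Fin q =>
    if j = (ofLex m).2 then C ((f (ofLex m).2).coeff (ofLex m).1) * X ^ (ofLex m).1 else 0).unbotD 0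

/-- The leading term submodule `L(F)`. -/
noncomputable def ltSubmodule {R : Type*} [CommRing R] {q : ℕ} (S : Set (Fin q → R[X])) :
    Submodule R[X] (Fin q → R[X]) :=
  Submodule.span R[X] (vlt '' S)

/-- `G` is a Gröbner basis of `M`: `G ⊆ M` and `L(G) = L(M)`. -/
def IsGroebner {R : Type*} [CommRing R] {q : ℕ} (M : Submodule R[X] (Fin q → R[X]))
    (G : Finset (Fin q → R[X])) : Prop :=
  (G : Set (Fin q → R[X])) ⊆ M ∧
    ltSubmodule (G : Set (Fin q → R[X])) = ltSubmodule (M : Set (Fin q → R[X]))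

/-- One-step reduction of `f` to `h` modulo the finite set `Fs` (Adams–Loustaunau Def. 4.1.1). -/
def ReducesOneStep {R : Type*} [CommRing R] {q : ℕ} (Fs : Finset (Fin q → R[X]))
    (f h : Fin q → R[X]) : Prop :=
  f ≠ 0 ∧ ∃ (m : ℕ) (jv : Fin m → Fin q → R[X]) (α : Fin m → ℕ) (β : Fin m → R),
    0 < m ∧ (∀ i, jv i ∈ Fs) ∧ (∀ i, jv i ≠ 0) ∧ Function.Injective jv ∧ (∀ i, β i ≠ 0) ∧
    (∀ i, vlm f = (vlm (jv i)).map fun mm => toLex (α i + (ofLex mm).1, (ofLex mm).2)) ∧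
    vlt f = ∑ i, (C (β i) * X ^ α i) • vlt (jv i) ∧
    h = f - ∑ i, (C (β i) * X ^ α i) • jv i

/-- Minimal Gröbner basis: a Gröbner basis each of whose elements is irreducible
modulo the others. -/
def IsMinimalGroebner {R : Type*} [CommRing R] {q : ℕ} (M : Submodule R[X] (Fin q → R[X]))
    (G : Finset (Fin q → R[X])) : Prop :=
  IsGroebner M G ∧ ∀ g ∈ G, ∀ h, ¬ ReducesOneStep (G.erase g) g h

/-- Support of a polynomial vector: monomials `(position, degree)` ordered lexicographically,
which is the position-over-term (pot) ordering. -/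
noncomputable def vsuppPot {R : Type*} [CommRing R] {q : ℕ} (f : Fin q → R[X]) :
    Finset (Lex (Fin q × ℕ)) :=
  Finset.univ.biUnion fun i => (f i).support.image fun α => toLex (i, α)

/-- Leading monomial w.r.t. the pot ordering. -/
noncomputable def vlmPot {R : Type*} [CommRing R] {q : ℕ} (f : Fin q → R[X]) :
    WithBot (Lex (Fin q × ℕ)) := (vsuppPot f).max

/-- Degree of the pot leading monomial (junk value `0` for the zero vector). -/
noncomputable def vdegPot {R : Type*} [CommRing R] {q : ℕ} (f : Fin q → R[X]) : ℕ :=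
  ((vlmPot f).map fun m => (ofLex m).2).unbotD 0

/-- Leading term w.r.t. the pot ordering. -/
noncomputable def vltPot {R : Type*} [CommRing R] {q : ℕ} (f : Fin q → R[X]) : Fin q → R[X] :=
  ((vlmPot f).map fun m => fun j : Fin q =>
    if j = (ofLex m).1 then C ((f (ofLex m).1).coeff (ofLex m).2) * X ^ (ofLex m).2 else 0).unbotD 0

/-- The pot leading term submodule. -/
noncomputable def ltSubmodulePot {R : Type*} [CommRing R] {q : ℕ} (S : Set (Fin q → R[X])) :
    Submodule R[X] (Fin q → R[X]) :=
  Submodule.span R[X] (vltPot '' S)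

/-- `G` is a Gröbner basis of `M` w.r.t. the pot ordering. -/
def IsGroebnerPot {R : Type*} [CommRing R] {q : ℕ} (M : Submodule R[X] (Fin q → R[X]))
    (G : Finset (Fin q → R[X])) : Prop :=
  (G : Set (Fin q → R[X])) ⊆ M ∧
    ltSubmodulePot (G : Set (Fin q → R[X])) = ltSubmodulePot (M : Set (Fin q → R[X]))

/-- One-step reduction w.r.t. the pot ordering. -/
def ReducesOneStepPot {R : Type*} [CommRing R] {q : ℕ} (Fs : Finset (Fin q → R[X]))
    (f h : Fin q → R[X]) : Prop :=
  f ≠ 0 ∧ ∃ (m : ℕ) (jv : Fin m → Fin q → R[X]) (α : Fin m → ℕ) (β : Fin m → R),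
    0 < m ∧ (∀ i, jv i ∈ Fs) ∧ (∀ i, jv i ≠ 0) ∧ Function.Injective jv ∧ (∀ i, β i ≠ 0) ∧
    (∀ i, vlmPot f = (vlmPot (jv i)).map fun mm => toLex ((ofLex mm).1, α i + (ofLex mm).2)) ∧
    vltPot f = ∑ i, (C (β i) * X ^ α i) • vltPot (jv i) ∧
    h = f - ∑ i, (C (β i) * X ^ α i) • jv i

/-- Minimal Gröbner basis w.r.t. the pot ordering. -/
def IsMinimalGroebnerPot {R : Type*} [CommRing R] {q : ℕ} (M : Submodule R[X] (Fin q → R[X]))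
    (G : Finset (Fin q → R[X])) : Prop :=
  IsGroebnerPot M G ∧ ∀ g ∈ G, ∀ h, ¬ ReducesOneStepPot (G.erase g) g h

section TopBasic

variable {F : Type*} [Field F] {q : ℕ}

/-- Coefficient of `f` at the monomial `μ` (top encoding). -/
noncomputable def mco (f : Fin q → F[X]) (μ : Lex (ℕ × Fin q)) : F :=
  (f (ofLex μ).2).coeff (ofLex μ).1

lemma mem_vsupp {f : Fin q → F[X]} {μ : Lex (ℕ × Fin q)} :
    μ ∈ vsupp f ↔ mco f μ ≠ 0 := by
  simp only [vsupp, Finset.mem_biUnion, Finset.mem_image, Finset.mem_univ, true_and,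
    Polynomial.mem_support_iff]
  constructor
  · rintro ⟨i, α, h, rfl⟩; exact h
  · intro h; exact ⟨(ofLex μ).2, (ofLex μ).1, h, rfl⟩

lemma mco_toLex (f : Fin q → F[X]) (a : ℕ) (j : Fin q) :
    mco f (toLex (a, j)) = (f j).coeff a := rfl

lemma le_vlm {f : Fin q → F[X]} {μ : Lex (ℕ × Fin q)} (h : mco f μ ≠ 0) :
    (μ : WithBot (Lex (ℕ × Fin q))) ≤ vlm f :=
  Finset.le_max (mem_vsupp.2 h)

lemma mco_eq_zero_of_lt {f : Fin q → F[X]} {μ : Lex (ℕ × Fin q)}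
    (h : vlm f < (μ : WithBot (Lex (ℕ × Fin q)))) : mco f μ = 0 := by
  by_contra hc
  exact absurd (le_vlm hc) (not_le.2 h)

lemma vlm_eq_bot_iff {f : Fin q → F[X]} : vlm f = ⊥ ↔ f = 0 := by
  rw [vlm, Finset.max_eq_bot]
  constructor
  · intro h
    funext j
    ext a
    have : toLex (a, j) ∉ vsupp f := by rw [h]; exact Finset.notMem_empty _
    simpa [mem_vsupp, mco_toLex] using this
  · intro h
    subst h
    ext μ
    simp [mem_vsupp, mco, Pi.zero_apply]

lemma exists_vlm {f : Fin q → F[X]} (hf : f ≠ 0) :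
    ∃ μ : Lex (ℕ × Fin q), vlm f = (μ : WithBot (Lex (ℕ × Fin q))) ∧ mco f μ ≠ 0 := by
  have h : vlm f ≠ ⊥ := fun h => hf (vlm_eq_bot_iff.1 h)
  obtain ⟨μ, hμ⟩ := Option.ne_none_iff_exists.1 h
  refine ⟨μ, hμ.symm, ?_⟩
  have : μ ∈ vsupp f := Finset.mem_of_max hμ.symm
  exact mem_vsupp.1 this

lemma vlm_lt_of {f : Fin q → F[X]} {μ : Lex (ℕ × Fin q)}
    (h : ∀ ν, μ ≤ ν → mco f ν = 0) : vlm f < (μ : WithBot (Lex (ℕ × Fin q))) := by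
  rcases eq_or_ne f 0 with rfl | hf
  · rw [vlm_eq_bot_iff.2 rfl]; exact WithBot.bot_lt_coe μ
  · obtain ⟨ν, hν, hco⟩ := exists_vlm hf
    rw [hν, WithBot.coe_lt_coe]
    by_contra hle
    exact hco (h ν (not_lt.1 hle))

lemma vlm_eq_iff {f : Fin q → F[X]} {μ : Lex (ℕ × Fin q)} :
    vlm f = (μ : WithBot (Lex (ℕ × Fin q))) ↔
      mco f μ ≠ 0 ∧ ∀ ν, μ < ν → mco f ν = 0 := by
  constructor
  · intro h
    refine ⟨mem_vsupp.1 (Finset.mem_of_max h), fun ν hν => mco_eq_zero_of_lt ?_⟩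
    rw [h]; exact_mod_cast hν
  · rintro ⟨h1, h2⟩
    refine le_antisymm ?_ (le_vlm h1)
    refine Finset.max_le fun ν hν => ?_
    rw [WithBot.coe_le_coe]
    by_contra hlt
    exact (mem_vsupp.1 hν) (h2 ν (not_le.1 hlt))

lemma vlm_sub_lt {f h : Fin q → F[X]} {μ : Lex (ℕ × Fin q)}
    (hf : vlm f = (μ : WithBot (Lex (ℕ × Fin q)))) (hh : vlm h = (μ : WithBot (Lex (ℕ × Fin q))))
    (hc : mco f μ = mco h μ) : vlm (f - h) < (μ : WithBot (Lex (ℕ × Fin q))) := by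
  refine vlm_lt_of fun ν hν => ?_
  have hsub : mco (f - h) ν = mco f ν - mco h ν := by
    simp [mco, Pi.sub_apply, Polynomial.coeff_sub]
  rcases eq_or_lt_of_le hν with rfl | hlt
  · rw [hsub, hc, sub_self]
  · rw [hsub, (vlm_eq_iff.1 hf).2 ν hlt, (vlm_eq_iff.1 hh).2 ν hlt, sub_self]

end TopBasic
section TopShift

variable {F : Type*} [Field F] {q : ℕ}

/-- Shift a (top) monomial up in degree by `δ`. -/
def shiftT {q : ℕ} (δ : ℕ) (μ : Lex (ℕ × Fin q)) : Lex (ℕ × Fin q) :=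
  toLex (δ + (ofLex μ).1, (ofLex μ).2)

lemma shiftT_lt_shiftT_iff {δ : ℕ} {μ ν : Lex (ℕ × Fin q)} :
    shiftT δ μ < shiftT δ ν ↔ μ < ν := by
  show toLex (δ + (ofLex μ).1, (ofLex μ).2) < toLex (δ + (ofLex ν).1, (ofLex ν).2) ↔
    toLex (ofLex μ) < toLex (ofLex ν)
  rw [Prod.Lex.lt_iff, Prod.Lex.lt_iff]
  simp only [ofLex_toLex]
  constructor
  · rintro (h | ⟨h1, h2⟩)
    · exact Or.inl (by omega)
    · exact Or.inr ⟨by omega, h2⟩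
  · rintro (h | ⟨h1, h2⟩)
    · exact Or.inl (by omega)
    · exact Or.inr ⟨by omega, h2⟩

lemma mco_monomial_smul (c : F) (α : ℕ) (g : Fin q → F[X]) (μ : Lex (ℕ × Fin q)) :
    mco ((C c * X ^ α) • g) μ =
      if α ≤ (ofLex μ).1 then c * mco g (toLex ((ofLex μ).1 - α, (ofLex μ).2)) else 0 := by
  show ((C c * X ^ α) * g (ofLex μ).2).coeff (ofLex μ).1 = _
  rw [mul_comm (C c) (X ^ α), mul_assoc, Polynomial.coeff_X_pow_mul']
  simp only [Polynomial.coeff_C_mul]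
  rfl

lemma mco_monomial_smul_shift (c : F) (α : ℕ) (g : Fin q → F[X]) (ν : Lex (ℕ × Fin q)) :
    mco ((C c * X ^ α) • g) (shiftT α ν) = c * mco g ν := by
  rw [shiftT, mco_monomial_smul]
  simp only [ofLex_toLex]
  simp only [Nat.le_add_right, ↓reduceIte, Nat.add_sub_cancel_left]
  rfl

lemma vlm_monomial_smul {c : F} (hc : c ≠ 0) (α : ℕ) {g : Fin q → F[X]} {μ : Lex (ℕ × Fin q)}
    (hg : vlm g = (μ : WithBot (Lex (ℕ × Fin q)))) :
    vlm ((C c * X ^ α) • g) = ((shiftT α μ : Lex (ℕ × Fin q)) : WithBot (Lex (ℕ × Fin q))) := by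
  obtain ⟨h1, h2⟩ := vlm_eq_iff.1 hg
  refine vlm_eq_iff.2 ⟨?_, fun ν hν => ?_⟩
  · rw [mco_monomial_smul_shift]
    exact mul_ne_zero hc h1
  · rw [mco_monomial_smul]
    by_cases hα : α ≤ (ofLex ν).1
    · rw [if_pos hα]
      have hlt : μ < toLex ((ofLex ν).1 - α, (ofLex ν).2) := by
        rw [← shiftT_lt_shiftT_iff (δ := α)]
        convert hν using 2
        show toLex _ = toLex (ofLex ν)
        congr 1
        ext
        · show α + ((ofLex ν).1 - α) = (ofLex ν).1; omega
        · rfl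
      rw [h2 _ hlt, mul_zero]
    · rw [if_neg hα]

lemma vlt_eq {f : Fin q → F[X]} {μ : Lex (ℕ × Fin q)}
    (h : vlm f = (μ : WithBot (Lex (ℕ × Fin q)))) :
    vlt f = fun j => if j = (ofLex μ).2 then C (mco f μ) * X ^ (ofLex μ).1 else 0 := by
  rw [vlt, h]
  rfl

lemma vlt_apply {f : Fin q → F[X]} {μ : Lex (ℕ × Fin q)}
    (h : vlm f = (μ : WithBot (Lex (ℕ × Fin q)))) (j : Fin q) :
    vlt f j = if j = (ofLex μ).2 then C (mco f μ) * X ^ (ofLex μ).1 else 0 := by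
  rw [vlt_eq h]

lemma vlt_zero : vlt (0 : Fin q → F[X]) = 0 := by
  rw [vlt, vlm_eq_bot_iff.2 rfl]
  rfl

lemma vdeg_eq {f : Fin q → F[X]} {μ : Lex (ℕ × Fin q)}
    (h : vlm f = (μ : WithBot (Lex (ℕ × Fin q)))) : vdeg f = (ofLex μ).1 := by
  rw [vdeg, h]
  rfl

lemma vlm_single {p : F[X]} (hp : p ≠ 0) (j : Fin q) :
    vlm (Pi.single j p : Fin q → F[X]) =
      ((toLex (p.natDegree, j) : Lex (ℕ × Fin q)) : WithBot (Lex (ℕ × Fin q))) := by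
  refine vlm_eq_iff.2 ⟨?_, fun ν hν => ?_⟩
  · show ((Pi.single j p : Fin q → F[X]) j).coeff p.natDegree ≠ 0
    rw [Pi.single_eq_same]
    exact Polynomial.leadingCoeff_ne_zero.2 hp
  · have hν' : p.natDegree < (ofLex ν).1 ∨ p.natDegree = (ofLex ν).1 ∧ j < (ofLex ν).2 := by
      have := (Prod.Lex.lt_iff).1 hν
      exact this
    show ((Pi.single j p : Fin q → F[X]) (ofLex ν).2).coeff (ofLex ν).1 = 0
    rcases hν' with h | ⟨h1, h2⟩
    · rcases eq_or_ne (ofLex ν).2 j with rfl | hne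
      · rw [Pi.single_eq_same]
        exact Polynomial.coeff_eq_zero_of_natDegree_lt h
      · rw [Pi.single_eq_of_ne hne]
        rfl
    · rw [Pi.single_eq_of_ne (by rintro rfl; exact lt_irrefl _ h2)]
      rfl

end TopShift
section TopDivision

variable {F : Type*} [Field F] {q : ℕ}

lemma mco_sub (f h : Fin q → F[X]) (ν : Lex (ℕ × Fin q)) :
    mco (f - h) ν = mco f ν - mco h ν := by
  simp [mco, Pi.sub_apply, Polynomial.coeff_sub]

lemma mco_smulF (c : F) (h : Fin q → F[X]) (ν : Lex (ℕ × Fin q)) :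
    mco (c • h) ν = c * mco h ν := by
  simp [mco, Pi.smul_apply, Polynomial.smul_eq_C_mul, Polynomial.coeff_C_mul]

lemma mco_ext {f h : Fin q → F[X]} (H : ∀ ν, mco f ν = mco h ν) : f = h := by
  funext j
  ext a
  exact H (toLex (a, j))

lemma mco_single (j : Fin q) (p : F[X]) (ν : Lex (ℕ × Fin q)) :
    mco (Pi.single j p : Fin q → F[X]) ν =
      if (ofLex ν).2 = j then p.coeff (ofLex ν).1 else 0 := by
  show ((Pi.single j p : Fin q → F[X]) (ofLex ν).2).coeff (ofLex ν).1 = _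
  rcases eq_or_ne (ofLex ν).2 j with h | h
  · rw [h, Pi.single_eq_same, if_pos rfl]
  · rw [Pi.single_eq_of_ne h, if_neg h]
    rfl

/-- Monomial vector for a (top) monomial. -/
noncomputable def monoT (μ : Lex (ℕ × Fin q)) : Fin q → F[X] :=
  Pi.single (ofLex μ).2 ((X : F[X]) ^ (ofLex μ).1)

lemma mco_monoT (μ ν : Lex (ℕ × Fin q)) :
    mco (monoT (F := F) μ) ν = if ν = μ then 1 else 0 := by
  rw [monoT, mco_single]
  rcases eq_or_ne ν μ with rfl | hne
  · rw [if_pos rfl, if_pos rfl, Polynomial.coeff_X_pow, if_pos rfl]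
  · rw [if_neg hne]
    rcases eq_or_ne (ofLex ν).2 (ofLex μ).2 with h2 | h2
    · rw [if_pos h2, Polynomial.coeff_X_pow, if_neg]
      intro h1
      exact hne (by
        show toLex (ofLex ν) = toLex (ofLex μ)
        rw [show ofLex ν = ofLex μ from Prod.ext h1 h2])
    · rw [if_neg h2]

lemma mco_sum_mono (S : Finset (Lex (ℕ × Fin q))) (co : Lex (ℕ × Fin q) → F)
    (ν : Lex (ℕ × Fin q)) :
    mco (∑ μ ∈ S, co μ • monoT μ) ν = if ν ∈ S then co ν else 0 := by
  have : mco (∑ μ ∈ S, co μ • monoT μ) ν = ∑ μ ∈ S, co μ * mco (monoT μ) ν := by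
    unfold mco
    rw [Finset.sum_apply, Polynomial.finset_sum_coeff]
    refine Finset.sum_congr rfl fun μ _ => ?_
    exact mco_smulF (co μ) (monoT μ) ν
  rw [this]
  rw [Finset.sum_congr rfl (fun μ _ => by rw [mco_monoT])]
  simp only [mul_ite, mul_one, mul_zero]
  exact Finset.sum_ite_eq S ν co

lemma repr_of_supp {S : Finset (Lex (ℕ × Fin q))} {r : Fin q → F[X]}
    (h : ∀ ν, ν ∉ S → mco r ν = 0) : r = ∑ μ ∈ S, mco r μ • monoT μ := by
  refine mco_ext fun ν => ?_
  rw [mco_sum_mono]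
  by_cases hν : ν ∈ S
  · rw [if_pos hν]
  · rw [if_neg hν, h ν hν]

/-- The division algorithm: every `f` can be reduced modulo `M` to a vector supported on
standard monomials. -/
lemma top_division (M : Submodule F[X] (Fin q → F[X])) {n : ℕ} {g : Fin n → Fin q → F[X]}
    (hgM : ∀ i, g i ∈ M) (lmg : Fin n → Lex (ℕ × Fin q))
    (hlm : ∀ i, vlm (g i) = ((lmg i : Lex (ℕ × Fin q)) : WithBot (Lex (ℕ × Fin q))))
    (L : Fin q → ℕ) (hL : ∀ j, ∃ i, ofLex (lmg i) = (L j, j)) (f : Fin q → F[X]) :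
    ∃ u ∈ M, ∀ ν : Lex (ℕ × Fin q), L (ofLex ν).2 ≤ (ofLex ν).1 → mco (f - u) ν = 0 := by
  suffices h : ∀ w : WithBot (Lex (ℕ × Fin q)), ∀ f : Fin q → F[X], vlm f = w →
      ∃ u ∈ M, ∀ ν : Lex (ℕ × Fin q), L (ofLex ν).2 ≤ (ofLex ν).1 → mco (f - u) ν = 0 by
    exact h _ f rfl
  haveI : WellFoundedLT (WithBot (Lex (ℕ × Fin q))) := @WithBot.instWellFoundedLT _ _ (inferInstance : WellFoundedLT (Lex (ℕ × Fin q)))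
  intro w
  induction w using WellFoundedLT.induction with
  | _ w IH =>
  intro f hf
  rcases eq_or_ne f 0 with rfl | hf0
  · exact ⟨0, M.zero_mem, fun ν _ => by simp [mco, Pi.zero_apply]⟩
  obtain ⟨μ, hμ, hc⟩ := exists_vlm hf0
  set c := mco f μ with hcdef
  by_cases hdiv : L (ofLex μ).2 ≤ (ofLex μ).1
  · -- reduce by a generator
    obtain ⟨i, hi⟩ := hL (ofLex μ).2
    have hci : mco (g i) (lmg i) ≠ 0 := (vlm_eq_iff.1 (hlm i)).1
    set t : Fin q → F[X] := (C (c / mco (g i) (lmg i)) * X ^ ((ofLex μ).1 - L (ofLex μ).2)) • g i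
      with ht
    have hlmt : vlm t = (μ : WithBot (Lex (ℕ × Fin q))) := by
      rw [ht, vlm_monomial_smul (div_ne_zero hc hci) _ (hlm i)]
      congr 1
      show toLex (_ + (ofLex (lmg i)).1, (ofLex (lmg i)).2) = toLex (ofLex μ)
      rw [hi]
      congr 1
      refine Prod.ext ?_ rfl
      show (ofLex μ).1 - L (ofLex μ).2 + L (ofLex μ).2 = (ofLex μ).1
      omega
    have hct : mco t μ = c := by
      have := mco_monomial_smul_shift (c / mco (g i) (lmg i)) ((ofLex μ).1 - L (ofLex μ).2)
        (g i) (lmg i)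
      have hshift : shiftT ((ofLex μ).1 - L (ofLex μ).2) (lmg i) = μ := by
        rw [shiftT, hi]
        show toLex _ = toLex (ofLex μ)
        congr 1
        refine Prod.ext ?_ rfl
        show (ofLex μ).1 - L (ofLex μ).2 + L (ofLex μ).2 = (ofLex μ).1
        omega
      rw [hshift] at this
      rw [this, div_mul_cancel₀ _ hci]
    have hlt : vlm (f - t) < w := by
      rw [← hf, hμ]
      exact vlm_sub_lt hμ hlmt hct.symm
    obtain ⟨u', hu'M, hu'⟩ := IH _ hlt (f - t) rfl
    refine ⟨u' + t, M.add_mem hu'M (M.smul_mem _ (hgM i)), fun ν hν => ?_⟩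
    have : f - (u' + t) = f - t - u' := by ring
    rw [this]
    exact hu' ν hν
  · -- move the leading term into the remainder
    set t : Fin q → F[X] := Pi.single (ofLex μ).2 (C c * X ^ (ofLex μ).1) with ht
    have hcne : c ≠ 0 := hc
    have hpne : (C c * X ^ (ofLex μ).1 : F[X]) ≠ 0 := by
      intro h
      apply hcne
      have := congrArg (fun p : F[X] => p.coeff (ofLex μ).1) h
      simpa [Polynomial.coeff_C_mul, Polynomial.coeff_X_pow] using this
    have hlmt : vlm t = (μ : WithBot (Lex (ℕ × Fin q))) := by
      rw [ht, vlm_single hpne]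
      congr 1
      show toLex _ = toLex (ofLex μ)
      congr 1
      refine Prod.ext ?_ rfl
      show (C c * X ^ (ofLex μ).1 : F[X]).natDegree = (ofLex μ).1
      rw [Polynomial.natDegree_C_mul_X_pow _ _ hcne]
    have hct : mco t μ = c := by
      rw [ht, mco_single, if_pos rfl]
      simp [Polynomial.coeff_C_mul, Polynomial.coeff_X_pow]
    have hlt : vlm (f - t) < w := by
      rw [← hf, hμ]
      exact vlm_sub_lt hμ hlmt hct.symm
    obtain ⟨u, huM, hu⟩ := IH _ hlt (f - t) rfl
    refine ⟨u, huM, fun ν hν => ?_⟩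
    have : f - u = f - t - u + t := by ring
    rw [this]
    have h1 : mco (f - t - u + t) ν = mco (f - t - u) ν + mco t ν := by
      simp [mco, Pi.add_apply, Polynomial.coeff_add]
    rw [h1, hu ν hν]
    have h2 : mco t ν = 0 := by
      rw [ht, mco_single]
      by_cases h3 : (ofLex ν).2 = (ofLex μ).2
      · rw [if_pos h3]
        simp only [Polynomial.coeff_C_mul, Polynomial.coeff_X_pow]
        rw [if_neg, mul_zero]
        intro h4
        have h5 := hν
        rw [h3, h4] at h5
        exact hdiv h5
      · rw [if_neg h3]
    rw [h2, add_zero]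

/-- The leading monomial of a nonzero element of the span of the leading terms of the `g i`
is divisible by one of the leading monomials of the `g i`. -/
lemma top_lm_mem {n : ℕ} {g : Fin n → Fin q → F[X]} (lmg : Fin n → Lex (ℕ × Fin q))
    (hlm : ∀ i, vlm (g i) = ((lmg i : Lex (ℕ × Fin q)) : WithBot (Lex (ℕ × Fin q))))
    {f : Fin q → F[X]} {μ : Lex (ℕ × Fin q)}
    (hf : vlm f = (μ : WithBot (Lex (ℕ × Fin q))))
    (hmem : vlt f ∈ Submodule.span F[X] (Set.range (vlt ∘ g))) :
    ∃ i, (ofLex (lmg i)).2 = (ofLex μ).2 ∧ (ofLex (lmg i)).1 ≤ (ofLex μ).1 := by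
  obtain ⟨p, hp⟩ := (Submodule.mem_span_range_iff_exists_fun _).1 hmem
  have hcμ : mco f μ ≠ 0 := (vlm_eq_iff.1 hf).1
  have hltf : vlt f (ofLex μ).2 = C (mco f μ) * X ^ (ofLex μ).1 := by
    rw [vlt_apply hf, if_pos rfl]
  have hco : ((vlt f) (ofLex μ).2).coeff (ofLex μ).1 ≠ 0 := by
    rw [hltf]
    simpa [Polynomial.coeff_C_mul, Polynomial.coeff_X_pow] using hcμ
  rw [← hp] at hco
  have hco2 : (∑ i, p i * (vlt (g i) (ofLex μ).2)).coeff (ofLex μ).1 ≠ 0 := by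
    rw [Finset.sum_apply] at hco
    exact hco
  rw [Polynomial.finset_sum_coeff] at hco2
  obtain ⟨i, _, hi⟩ := Finset.exists_ne_zero_of_sum_ne_zero hco2
  have hposeq : (ofLex μ).2 = (ofLex (lmg i)).2 := by
    by_contra hpos
    apply hi
    rw [vlt_apply (hlm i), if_neg hpos, mul_zero]
    simp
  refine ⟨i, hposeq.symm, ?_⟩
  by_contra hdeg
  apply hi
  rw [vlt_apply (hlm i), if_pos hposeq]
  have hre : p i * (C (mco (g i) (lmg i)) * X ^ (ofLex (lmg i)).1) =
      C (mco (g i) (lmg i)) * p i * X ^ (ofLex (lmg i)).1 := by ring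
  rw [hre, Polynomial.coeff_mul_X_pow', if_neg (by omega)]

end TopDivision
section TopBasisSec

variable {F : Type*} [Field F] {q : ℕ}

/-- The standard monomials below the staircase `L`. -/
noncomputable def StdT {q : ℕ} (L : Fin q → ℕ) : Finset (Lex (ℕ × Fin q)) :=
  Finset.univ.biUnion fun j => (Finset.range (L j)).image fun a => toLex (a, j)

lemma mem_StdT {L : Fin q → ℕ} {μ : Lex (ℕ × Fin q)} :
    μ ∈ StdT L ↔ (ofLex μ).1 < L (ofLex μ).2 := by
  simp only [StdT, Finset.mem_biUnion, Finset.mem_univ, true_and, Finset.mem_image,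
    Finset.mem_range]
  constructor
  · rintro ⟨j, a, ha, rfl⟩; exact ha
  · intro h; exact ⟨(ofLex μ).2, (ofLex μ).1, h, rfl⟩

lemma card_StdT (L : Fin q → ℕ) : (StdT L).card = ∑ j, L j := by
  rw [StdT, Finset.card_biUnion]
  · refine Finset.sum_congr rfl fun j _ => ?_
    rw [Finset.card_image_of_injective _ (fun a b h => ?_), Finset.card_range]
    exact congrArg (fun μ : Lex (ℕ × Fin q) => (ofLex μ).1) h
  · intro j _ k _ hjk
    rw [Function.onFun, Finset.disjoint_left]
    rintro μ hμ hμ'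
    obtain ⟨a, _, rfl⟩ := Finset.mem_image.1 hμ
    obtain ⟨b, _, hb⟩ := Finset.mem_image.1 hμ'
    exact hjk (congrArg (fun μ : Lex (ℕ × Fin q) => (ofLex μ).2) hb.symm)

lemma top_quot_basis (M : Submodule F[X] (Fin q → F[X])) {n : ℕ} {g : Fin n → Fin q → F[X]}
    (hgM : ∀ i, g i ∈ M) (lmg : Fin n → Lex (ℕ × Fin q))
    (hlm : ∀ i, vlm (g i) = ((lmg i : Lex (ℕ × Fin q)) : WithBot (Lex (ℕ × Fin q))))
    (L : Fin q → ℕ) (hL : ∀ j, ∃ i, ofLex (lmg i) = (L j, j))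
    (hLT : ∀ f : Fin q → F[X], f ∈ M → ∀ μ : Lex (ℕ × Fin q),
      vlm f = (μ : WithBot (Lex (ℕ × Fin q))) → L (ofLex μ).2 ≤ (ofLex μ).1) :
    Nonempty (Module.Basis {μ // μ ∈ StdT L} F ((Fin q → F[X]) ⧸ M.restrictScalars F)) := by
  set S := StdT L with hS
  set mk := (M.restrictScalars F).mkQ with hmk
  set v : {μ // μ ∈ S} → ((Fin q → F[X]) ⧸ M.restrictScalars F) :=
    fun μ => mk (monoT μ.1) with hv
  have hind : LinearIndependent F v := by
    rw [Fintype.linearIndependent_iff]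
    intro c hc
    set cl : Lex (ℕ × Fin q) → F := fun ν => if h : ν ∈ S then c ⟨ν, h⟩ else 0 with hcl
    set r : Fin q → F[X] := ∑ μ ∈ S, cl μ • monoT μ with hr
    have hmco : ∀ ν, mco r ν = if ν ∈ S then cl ν else 0 := fun ν => mco_sum_mono S cl ν
    have hmkr : mk r = 0 := by
      rw [hr, map_sum]
      have e1 : ∑ x ∈ S, mk (cl x • monoT x) = ∑ x ∈ S, cl x • mk (monoT x) :=
        Finset.sum_congr rfl fun x _ => map_smul mk (cl x) (monoT x)
      rw [e1, ← Finset.sum_attach S (fun μ => cl μ • (mk (monoT μ))), ← hc]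
      refine Finset.sum_congr rfl fun μ _ => ?_
      congr 1
      exact dif_pos μ.2
    have hrM : r ∈ M := by
      have := (Submodule.Quotient.mk_eq_zero (M.restrictScalars F)).1 hmkr
      exact this
    have hr0 : r = 0 := by
      by_contra hr0
      obtain ⟨μ₀, hμ₀, hco₀⟩ := exists_vlm hr0
      have h1 := hLT r hrM μ₀ hμ₀
      have h2 : μ₀ ∈ S := by
        by_contra h2
        exact hco₀ (by rw [hmco, if_neg h2])
      rw [hS, mem_StdT] at h2
      omega
    intro i
    have := hmco i.1
    rw [hr0, if_pos i.2] at this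
    have hz : mco (0 : Fin q → F[X]) i.1 = 0 := by simp [mco, Pi.zero_apply]
    rw [hz] at this
    have : cl i.1 = 0 := this.symm
    rw [hcl] at this
    simpa [dif_pos i.2] using this
  have hsp : ⊤ ≤ Submodule.span F (Set.range v) := by
    rintro x -
    obtain ⟨f, rfl⟩ := Submodule.mkQ_surjective (M.restrictScalars F) x
    obtain ⟨u, huM, hu⟩ := top_division M hgM lmg hlm L hL f
    have hsupp : ∀ ν, ν ∉ S → mco (f - u) ν = 0 := by
      intro ν hν
      rw [hS, mem_StdT] at hν
      exact hu ν (by omega)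
    have hmkeq : mk f = mk (f - u) := by
      rw [hmk]
      rw [show f = (f - u) + u by ring, map_add]
      have : (M.restrictScalars F).mkQ u = 0 :=
        (Submodule.Quotient.mk_eq_zero _).2 huM
      rw [this, add_zero]
      congr 1
      ring
    rw [hmkeq, repr_of_supp hsupp, map_sum]
    rw [← Finset.sum_attach S (fun μ => mk (mco (f - u) μ • monoT μ))]
    refine Submodule.sum_mem _ fun μ _ => ?_
    rw [map_smul]
    exact Submodule.smul_mem _ _ (Submodule.subset_span ⟨μ, rfl⟩)
  exact ⟨Module.Basis.mk hind hsp⟩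

end TopBasisSec
section TopMinimal

variable {F : Type*} [Field F] {q : ℕ}

lemma top_pos_inj {n : ℕ} {M : Submodule F[X] (Fin q → F[X])} {g : Fin n → Fin q → F[X]}
    (hginj : Function.Injective g) (hgz : ∀ i, g i ≠ 0)
    (hGB : IsMinimalGroebner M (Finset.image g Finset.univ))
    (lmg : Fin n → Lex (ℕ × Fin q))
    (hlm : ∀ i, vlm (g i) = ((lmg i : Lex (ℕ × Fin q)) : WithBot (Lex (ℕ × Fin q)))) :
    Function.Injective fun i => (ofLex (lmg i)).2 := by
  have key : ∀ i k : Fin n, i ≠ k → (ofLex (lmg i)).2 = (ofLex (lmg k)).2 →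
      (ofLex (lmg i)).1 ≤ (ofLex (lmg k)).1 → False := by
    intro i k hik hpos hdeg
    have hci : mco (g i) (lmg i) ≠ 0 := (vlm_eq_iff.1 (hlm i)).1
    have hck : mco (g k) (lmg k) ≠ 0 := (vlm_eq_iff.1 (hlm k)).1
    set α := (ofLex (lmg k)).1 - (ofLex (lmg i)).1 with hα
    set β := mco (g k) (lmg k) / mco (g i) (lmg i) with hβ
    refine hGB.2 (g k) (Finset.mem_image.2 ⟨k, Finset.mem_univ k, rfl⟩)
      (g k - ∑ _t : Fin 1, (C β * X ^ α) • g i) ⟨hgz k, 1, (fun _ => g i), (fun _ => α),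
      (fun _ => β), one_pos, ?_, fun _ => hgz i, fun a b _ => Subsingleton.elim a b,
      fun _ => div_ne_zero hck hci, ?_, ?_, rfl⟩
    · intro t
      exact Finset.mem_erase.2 ⟨fun h => hik (hginj h),
        Finset.mem_image.2 ⟨i, Finset.mem_univ i, rfl⟩⟩
    · intro t
      rw [hlm i, hlm k, WithBot.map_coe, WithBot.coe_eq_coe]
      show toLex (ofLex (lmg k)) = toLex (α + (ofLex (lmg i)).1, (ofLex (lmg i)).2)
      congr 1
      refine Prod.ext ?_ hpos.symm
      show (ofLex (lmg k)).1 = α + (ofLex (lmg i)).1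
      omega
    · rw [Fin.sum_univ_one]
      funext j
      rw [vlt_apply (hlm k), Pi.smul_apply, vlt_apply (hlm i), smul_eq_mul]
      rw [← hpos]
      by_cases hj : j = (ofLex (lmg i)).2
      · rw [if_pos hj, if_pos hj]
        rw [show C β * X ^ α * (C (mco (g i) (lmg i)) * X ^ (ofLex (lmg i)).1) =
          C (β * mco (g i) (lmg i)) * X ^ (α + (ofLex (lmg i)).1) by
            rw [C_mul, pow_add]; ring]
        rw [hβ, div_mul_cancel₀ _ hci]
        have he : α + (ofLex (lmg i)).1 = (ofLex (lmg k)).1 := by omega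
        rw [he]
      · rw [if_neg hj, if_neg hj, mul_zero]
  intro i k h
  by_contra hne
  rcases le_total (ofLex (lmg i)).1 (ofLex (lmg k)).1 with hle | hle
  · exact key i k hne h hle
  · exact key k i (Ne.symm hne) h.symm hle

/-- Full rank gives, for each position, a nonzero "single" vector in `M`. -/
lemma exists_single_mem (M : Submodule F[X] (Fin q → F[X]))
    (hrank : Module.rank F[X] ↥M = q) (j : Fin q) :
    ∃ p : F[X], p ≠ 0 ∧ (Pi.single j p : Fin q → F[X]) ∈ M := by
  obtain ⟨n, b⟩ := Submodule.basisOfPid (Pi.basisFun F[X] (Fin q)) M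
  have hnq : n = q := by
    have h1 := b.mk_eq_rank
    rw [hrank] at h1
    simpa using h1
  set e : Fin q ≃ Fin n := finCongr hnq.symm with he
  set v : Fin q → (Fin q → F[X]) := fun i => (b (e i) : Fin q → F[X]) with hv
  have hvM : ∀ i, v i ∈ M := fun i => (b (e i)).2
  have hli : LinearIndependent F[X] v :=
    (b.linearIndependent.map' M.subtype M.ker_subtype).comp e e.injective
  set A : Matrix (Fin q) (Fin q) F[X] := Matrix.of v with hA
  have hdet : A.det ≠ 0 := by
    intro hdet
    obtain ⟨w, hw0, hw⟩ := Matrix.exists_vecMul_eq_zero_iff.2 hdet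
    have : ∑ i, w i • v i = 0 := by
      funext k
      have := congrFun hw k
      rw [Matrix.vecMul, dotProduct] at this
      simpa [hA, Finset.sum_apply, Pi.smul_apply, smul_eq_mul] using this
    exact hw0 (funext (Fintype.linearIndependent_iff.1 hli w this))
  refine ⟨A.det, hdet, ?_⟩
  have hsum : (Pi.single j A.det : Fin q → F[X]) = ∑ i, A.adjugate j i • v i := by
    funext k
    rw [Finset.sum_apply]
    have : ∑ i, (A.adjugate j i • v i) k = (A.adjugate * A) j k := by
      rw [Matrix.mul_apply]
      rfl
    rw [this, Matrix.adjugate_mul, Matrix.smul_apply, Matrix.one_apply]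
    rcases eq_or_ne k j with rfl | hkj
    · simp [Pi.single_eq_same]
    · rw [if_neg (Ne.symm hkj), Pi.single_eq_of_ne hkj]
      simp
  rw [hsum]
  exact Submodule.sum_mem _ fun i _ => Submodule.smul_mem _ _ (hvM i)

end TopMinimal
section PotBasic

variable {F : Type*} [Field F] {q : ℕ}

/-- Coefficient of `f` at the monomial `μ` (top encoding). -/
noncomputable def mcoP (f : Fin q → F[X]) (μ : Lex (Fin q × ℕ)) : F :=
  (f (ofLex μ).1).coeff (ofLex μ).2

lemma mem_vsuppP {f : Fin q → F[X]} {μ : Lex (Fin q × ℕ)} :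
    μ ∈ vsuppPot f ↔ mcoP f μ ≠ 0 := by
  simp only [vsuppPot, Finset.mem_biUnion, Finset.mem_image, Finset.mem_univ, true_and,
    Polynomial.mem_support_iff]
  constructor
  · rintro ⟨i, α, h, rfl⟩; exact h
  · intro h; exact ⟨(ofLex μ).1, (ofLex μ).2, h, rfl⟩

lemma mco_toLexP (f : Fin q → F[X]) (a : ℕ) (j : Fin q) :
    mcoP f (toLex (j, a)) = (f j).coeff a := rfl

lemma le_vlmP {f : Fin q → F[X]} {μ : Lex (Fin q × ℕ)} (h : mcoP f μ ≠ 0) :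
    (μ : WithBot (Lex (Fin q × ℕ))) ≤ vlmPot f :=
  Finset.le_max (mem_vsuppP.2 h)

lemma mco_eq_zero_of_ltP {f : Fin q → F[X]} {μ : Lex (Fin q × ℕ)}
    (h : vlmPot f < (μ : WithBot (Lex (Fin q × ℕ)))) : mcoP f μ = 0 := by
  by_contra hc
  exact absurd (le_vlmP hc) (not_le.2 h)

lemma vlm_eq_bot_iffP {f : Fin q → F[X]} : vlmPot f = ⊥ ↔ f = 0 := by
  rw [vlmPot, Finset.max_eq_bot]
  constructor
  · intro h
    funext j
    ext a
    have : toLex (j, a) ∉ vsuppPot f := by rw [h]; exact Finset.notMem_empty _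
    simpa [mem_vsuppP, mco_toLexP] using this
  · intro h
    subst h
    ext μ
    simp [mem_vsuppP, mcoP, Pi.zero_apply]

lemma exists_vlmP {f : Fin q → F[X]} (hf : f ≠ 0) :
    ∃ μ : Lex (Fin q × ℕ), vlmPot f = (μ : WithBot (Lex (Fin q × ℕ))) ∧ mcoP f μ ≠ 0 := by
  have h : vlmPot f ≠ ⊥ := fun h => hf (vlm_eq_bot_iffP.1 h)
  obtain ⟨μ, hμ⟩ := Option.ne_none_iff_exists.1 h
  refine ⟨μ, hμ.symm, ?_⟩
  have : μ ∈ vsuppPot f := Finset.mem_of_max hμ.symm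
  exact mem_vsuppP.1 this

lemma vlm_lt_ofP {f : Fin q → F[X]} {μ : Lex (Fin q × ℕ)}
    (h : ∀ ν, μ ≤ ν → mcoP f ν = 0) : vlmPot f < (μ : WithBot (Lex (Fin q × ℕ))) := by
  rcases eq_or_ne f 0 with rfl | hf
  · rw [vlm_eq_bot_iffP.2 rfl]; exact WithBot.bot_lt_coe μ
  · obtain ⟨ν, hν, hco⟩ := exists_vlmP hf
    rw [hν, WithBot.coe_lt_coe]
    by_contra hle
    exact hco (h ν (not_lt.1 hle))

lemma vlm_eq_iffP {f : Fin q → F[X]} {μ : Lex (Fin q × ℕ)} :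
    vlmPot f = (μ : WithBot (Lex (Fin q × ℕ))) ↔
      mcoP f μ ≠ 0 ∧ ∀ ν, μ < ν → mcoP f ν = 0 := by
  constructor
  · intro h
    refine ⟨mem_vsuppP.1 (Finset.mem_of_max h), fun ν hν => mco_eq_zero_of_ltP ?_⟩
    rw [h]; exact_mod_cast hν
  · rintro ⟨h1, h2⟩
    refine le_antisymm ?_ (le_vlmP h1)
    refine Finset.max_le fun ν hν => ?_
    rw [WithBot.coe_le_coe]
    by_contra hlt
    exact (mem_vsuppP.1 hν) (h2 ν (not_le.1 hlt))

lemma vlm_sub_ltP {f h : Fin q → F[X]} {μ : Lex (Fin q × ℕ)}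
    (hf : vlmPot f = (μ : WithBot (Lex (Fin q × ℕ)))) (hh : vlmPot h = (μ : WithBot (Lex (Fin q × ℕ))))
    (hc : mcoP f μ = mcoP h μ) : vlmPot (f - h) < (μ : WithBot (Lex (Fin q × ℕ))) := by
  refine vlm_lt_ofP fun ν hν => ?_
  have hsub : mcoP (f - h) ν = mcoP f ν - mcoP h ν := by
    simp [mcoP, Pi.sub_apply, Polynomial.coeff_sub]
  rcases eq_or_lt_of_le hν with rfl | hlt
  · rw [hsub, hc, sub_self]
  · rw [hsub, (vlm_eq_iffP.1 hf).2 ν hlt, (vlm_eq_iffP.1 hh).2 ν hlt, sub_self]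

end PotBasic

section PotShift

variable {F : Type*} [Field F] {q : ℕ}

/-- Shift a (top) monomial up in degree by `δ`. -/
def shiftTP {q : ℕ} (δ : ℕ) (μ : Lex (Fin q × ℕ)) : Lex (Fin q × ℕ) :=
  toLex ((ofLex μ).1, δ + (ofLex μ).2)

lemma shiftT_lt_shiftT_iffP {δ : ℕ} {μ ν : Lex (Fin q × ℕ)} :
    shiftTP δ μ < shiftTP δ ν ↔ μ < ν := by
  show toLex ((ofLex μ).1, δ + (ofLex μ).2) < toLex ((ofLex ν).1, δ + (ofLex ν).2) ↔
    toLex (ofLex μ) < toLex (ofLex ν)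
  rw [Prod.Lex.lt_iff, Prod.Lex.lt_iff]
  simp only [ofLex_toLex]
  constructor
  · rintro (h | ⟨h1, h2⟩)
    · exact Or.inl h
    · exact Or.inr ⟨h1, by omega⟩
  · rintro (h | ⟨h1, h2⟩)
    · exact Or.inl h
    · exact Or.inr ⟨h1, by omega⟩

lemma mco_monomial_smulP (c : F) (α : ℕ) (g : Fin q → F[X]) (μ : Lex (Fin q × ℕ)) :
    mcoP ((C c * X ^ α) • g) μ =
      if α ≤ (ofLex μ).2 then c * mcoP g (toLex ((ofLex μ).1, (ofLex μ).2 - α)) else 0 := by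
  show ((C c * X ^ α) * g (ofLex μ).1).coeff (ofLex μ).2 = _
  rw [mul_comm (C c) (X ^ α), mul_assoc, Polynomial.coeff_X_pow_mul']
  simp only [Polynomial.coeff_C_mul]
  rfl

lemma mco_monomial_smul_shiftP (c : F) (α : ℕ) (g : Fin q → F[X]) (ν : Lex (Fin q × ℕ)) :
    mcoP ((C c * X ^ α) • g) (shiftTP α ν) = c * mcoP g ν := by
  rw [shiftTP, mco_monomial_smulP]
  simp only [ofLex_toLex]
  simp only [Nat.le_add_right, ↓reduceIte, Nat.add_sub_cancel_left]
  rfl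

lemma vlm_monomial_smulP {c : F} (hc : c ≠ 0) (α : ℕ) {g : Fin q → F[X]} {μ : Lex (Fin q × ℕ)}
    (hg : vlmPot g = (μ : WithBot (Lex (Fin q × ℕ)))) :
    vlmPot ((C c * X ^ α) • g) = ((shiftTP α μ : Lex (Fin q × ℕ)) : WithBot (Lex (Fin q × ℕ))) := by
  obtain ⟨h1, h2⟩ := vlm_eq_iffP.1 hg
  refine vlm_eq_iffP.2 ⟨?_, fun ν hν => ?_⟩
  · rw [mco_monomial_smul_shiftP]
    exact mul_ne_zero hc h1
  · rw [mco_monomial_smulP]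
    by_cases hα : α ≤ (ofLex ν).2
    · rw [if_pos hα]
      have hlt : μ < toLex ((ofLex ν).1, (ofLex ν).2 - α) := by
        rw [← shiftT_lt_shiftT_iffP (δ := α)]
        convert hν using 2
        show toLex _ = toLex (ofLex ν)
        congr 1
        ext
        · rfl
        · show α + ((ofLex ν).2 - α) = (ofLex ν).2; omega
      rw [h2 _ hlt, mul_zero]
    · rw [if_neg hα]

lemma vlt_eqP {f : Fin q → F[X]} {μ : Lex (Fin q × ℕ)}
    (h : vlmPot f = (μ : WithBot (Lex (Fin q × ℕ)))) :
    vltPot f = fun j => if j = (ofLex μ).1 then C (mcoP f μ) * X ^ (ofLex μ).2 else 0 := by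
  rw [vltPot, h]
  rfl

lemma vlt_applyP {f : Fin q → F[X]} {μ : Lex (Fin q × ℕ)}
    (h : vlmPot f = (μ : WithBot (Lex (Fin q × ℕ)))) (j : Fin q) :
    vltPot f j = if j = (ofLex μ).1 then C (mcoP f μ) * X ^ (ofLex μ).2 else 0 := by
  rw [vlt_eqP h]

lemma vlt_zeroP : vltPot (0 : Fin q → F[X]) = 0 := by
  rw [vltPot, vlm_eq_bot_iffP.2 rfl]
  rfl

lemma vdeg_eqP {f : Fin q → F[X]} {μ : Lex (Fin q × ℕ)}
    (h : vlmPot f = (μ : WithBot (Lex (Fin q × ℕ)))) : vdegPot f = (ofLex μ).2 := by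
  rw [vdegPot, h]
  rfl

lemma vlm_singleP {p : F[X]} (hp : p ≠ 0) (j : Fin q) :
    vlmPot (Pi.single j p : Fin q → F[X]) =
      ((toLex (j, p.natDegree) : Lex (Fin q × ℕ)) : WithBot (Lex (Fin q × ℕ))) := by
  refine vlm_eq_iffP.2 ⟨?_, fun ν hν => ?_⟩
  · show ((Pi.single j p : Fin q → F[X]) j).coeff p.natDegree ≠ 0
    rw [Pi.single_eq_same]
    exact Polynomial.leadingCoeff_ne_zero.2 hp
  · have hν' : j < (ofLex ν).1 ∨ j = (ofLex ν).1 ∧ p.natDegree < (ofLex ν).2 := by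
      have := (Prod.Lex.lt_iff).1 hν
      exact this
    show ((Pi.single j p : Fin q → F[X]) (ofLex ν).1).coeff (ofLex ν).2 = 0
    rcases hν' with h | ⟨h1, h2⟩
    · rw [Pi.single_eq_of_ne (by rintro rfl; exact lt_irrefl _ h)]
      rfl
    · rw [← h1, Pi.single_eq_same]
      exact Polynomial.coeff_eq_zero_of_natDegree_lt h2

end PotShift

section PotDivision

variable {F : Type*} [Field F] {q : ℕ}

lemma mco_subP (f h : Fin q → F[X]) (ν : Lex (Fin q × ℕ)) :
    mcoP (f - h) ν = mcoP f ν - mcoP h ν := by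
  simp [mcoP, Pi.sub_apply, Polynomial.coeff_sub]

lemma mco_smulFP (c : F) (h : Fin q → F[X]) (ν : Lex (Fin q × ℕ)) :
    mcoP (c • h) ν = c * mcoP h ν := by
  simp [mcoP, Pi.smul_apply, Polynomial.smul_eq_C_mul, Polynomial.coeff_C_mul]

lemma mco_extP {f h : Fin q → F[X]} (H : ∀ ν, mcoP f ν = mcoP h ν) : f = h := by
  funext j
  ext a
  exact H (toLex (j, a))

lemma mco_singleP (j : Fin q) (p : F[X]) (ν : Lex (Fin q × ℕ)) :
    mcoP (Pi.single j p : Fin q → F[X]) ν =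
      if (ofLex ν).1 = j then p.coeff (ofLex ν).2 else 0 := by
  show ((Pi.single j p : Fin q → F[X]) (ofLex ν).1).coeff (ofLex ν).2 = _
  rcases eq_or_ne (ofLex ν).1 j with h | h
  · rw [h, Pi.single_eq_same, if_pos rfl]
  · rw [Pi.single_eq_of_ne h, if_neg h]
    rfl

/-- Monomial vector for a (top) monomial. -/
noncomputable def monoTP (μ : Lex (Fin q × ℕ)) : Fin q → F[X] :=
  Pi.single (ofLex μ).1 ((X : F[X]) ^ (ofLex μ).2)

lemma mco_monoTP (μ ν : Lex (Fin q × ℕ)) :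
    mcoP (monoTP (F := F) μ) ν = if ν = μ then 1 else 0 := by
  rw [monoTP, mco_singleP]
  rcases eq_or_ne ν μ with rfl | hne
  · rw [if_pos rfl, if_pos rfl, Polynomial.coeff_X_pow, if_pos rfl]
  · rw [if_neg hne]
    rcases eq_or_ne (ofLex ν).1 (ofLex μ).1 with h2 | h2
    · rw [if_pos h2, Polynomial.coeff_X_pow, if_neg]
      intro h1
      exact hne (by
        show toLex (ofLex ν) = toLex (ofLex μ)
        rw [show ofLex ν = ofLex μ from Prod.ext h2 h1])
    · rw [if_neg h2]

lemma mco_sum_monoP (S : Finset (Lex (Fin q × ℕ))) (co : Lex (Fin q × ℕ) → F)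
    (ν : Lex (Fin q × ℕ)) :
    mcoP (∑ μ ∈ S, co μ • monoTP μ) ν = if ν ∈ S then co ν else 0 := by
  have : mcoP (∑ μ ∈ S, co μ • monoTP μ) ν = ∑ μ ∈ S, co μ * mcoP (monoTP μ) ν := by
    unfold mcoP
    rw [Finset.sum_apply, Polynomial.finset_sum_coeff]
    refine Finset.sum_congr rfl fun μ _ => ?_
    exact mco_smulFP (co μ) (monoTP μ) ν
  rw [this]
  rw [Finset.sum_congr rfl (fun μ _ => by rw [mco_monoTP])]
  simp only [mul_ite, mul_one, mul_zero]
  exact Finset.sum_ite_eq S ν co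

lemma repr_of_suppP {S : Finset (Lex (Fin q × ℕ))} {r : Fin q → F[X]}
    (h : ∀ ν, ν ∉ S → mcoP r ν = 0) : r = ∑ μ ∈ S, mcoP r μ • monoTP μ := by
  refine mco_extP fun ν => ?_
  rw [mco_sum_monoP]
  by_cases hν : ν ∈ S
  · rw [if_pos hν]
  · rw [if_neg hν, h ν hν]

/-- The division algorithm: every `f` can be reduced modulo `M` to a vector supported on
standard monomials. -/
lemma top_divisionP (M : Submodule F[X] (Fin q → F[X])) {n : ℕ} {g : Fin n → Fin q → F[X]}
    (hgM : ∀ i, g i ∈ M) (lmg : Fin n → Lex (Fin q × ℕ))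
    (hlm : ∀ i, vlmPot (g i) = ((lmg i : Lex (Fin q × ℕ)) : WithBot (Lex (Fin q × ℕ))))
    (L : Fin q → ℕ) (hL : ∀ j, ∃ i, ofLex (lmg i) = (j, L j)) (f : Fin q → F[X]) :
    ∃ u ∈ M, ∀ ν : Lex (Fin q × ℕ), L (ofLex ν).1 ≤ (ofLex ν).2 → mcoP (f - u) ν = 0 := by
  suffices h : ∀ w : WithBot (Lex (Fin q × ℕ)), ∀ f : Fin q → F[X], vlmPot f = w →
      ∃ u ∈ M, ∀ ν : Lex (Fin q × ℕ), L (ofLex ν).1 ≤ (ofLex ν).2 → mcoP (f - u) ν = 0 by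
    exact h _ f rfl
  haveI : WellFoundedLT (WithBot (Lex (Fin q × ℕ))) := @WithBot.instWellFoundedLT _ _ (inferInstance : WellFoundedLT (Lex (Fin q × ℕ)))
  intro w
  induction w using WellFoundedLT.induction with
  | _ w IH =>
  intro f hf
  rcases eq_or_ne f 0 with rfl | hf0
  · exact ⟨0, M.zero_mem, fun ν _ => by simp [mcoP, Pi.zero_apply]⟩
  obtain ⟨μ, hμ, hc⟩ := exists_vlmP hf0
  set c := mcoP f μ with hcdef
  by_cases hdiv : L (ofLex μ).1 ≤ (ofLex μ).2
  · -- reduce by a generator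
    obtain ⟨i, hi⟩ := hL (ofLex μ).1
    have hci : mcoP (g i) (lmg i) ≠ 0 := (vlm_eq_iffP.1 (hlm i)).1
    set t : Fin q → F[X] := (C (c / mcoP (g i) (lmg i)) * X ^ ((ofLex μ).2 - L (ofLex μ).1)) • g i
      with ht
    have hlmt : vlmPot t = (μ : WithBot (Lex (Fin q × ℕ))) := by
      rw [ht, vlm_monomial_smulP (div_ne_zero hc hci) _ (hlm i)]
      congr 1
      show toLex ((ofLex (lmg i)).1, _ + (ofLex (lmg i)).2) = toLex (ofLex μ)
      rw [hi]
      congr 1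
      refine Prod.ext rfl ?_
      show (ofLex μ).2 - L (ofLex μ).1 + L (ofLex μ).1 = (ofLex μ).2
      omega
    have hct : mcoP t μ = c := by
      have := mco_monomial_smul_shiftP (c / mcoP (g i) (lmg i)) ((ofLex μ).2 - L (ofLex μ).1)
        (g i) (lmg i)
      have hshift : shiftTP ((ofLex μ).2 - L (ofLex μ).1) (lmg i) = μ := by
        rw [shiftTP, hi]
        show toLex _ = toLex (ofLex μ)
        congr 1
        refine Prod.ext rfl ?_
        show (ofLex μ).2 - L (ofLex μ).1 + L (ofLex μ).1 = (ofLex μ).2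
        omega
      rw [hshift] at this
      rw [this, div_mul_cancel₀ _ hci]
    have hlt : vlmPot (f - t) < w := by
      rw [← hf, hμ]
      exact vlm_sub_ltP hμ hlmt hct.symm
    obtain ⟨u', hu'M, hu'⟩ := IH _ hlt (f - t) rfl
    refine ⟨u' + t, M.add_mem hu'M (M.smul_mem _ (hgM i)), fun ν hν => ?_⟩
    have : f - (u' + t) = f - t - u' := by ring
    rw [this]
    exact hu' ν hν
  · -- move the leading term into the remainder
    set t : Fin q → F[X] := Pi.single (ofLex μ).1 (C c * X ^ (ofLex μ).2) with ht
    have hcne : c ≠ 0 := hc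
    have hpne : (C c * X ^ (ofLex μ).2 : F[X]) ≠ 0 := by
      intro h
      apply hcne
      have := congrArg (fun p : F[X] => p.coeff (ofLex μ).2) h
      simpa [Polynomial.coeff_C_mul, Polynomial.coeff_X_pow] using this
    have hlmt : vlmPot t = (μ : WithBot (Lex (Fin q × ℕ))) := by
      rw [ht, vlm_singleP hpne]
      congr 1
      show toLex _ = toLex (ofLex μ)
      congr 1
      refine Prod.ext rfl ?_
      show (C c * X ^ (ofLex μ).2 : F[X]).natDegree = (ofLex μ).2
      rw [Polynomial.natDegree_C_mul_X_pow _ _ hcne]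
    have hct : mcoP t μ = c := by
      rw [ht, mco_singleP, if_pos rfl]
      simp [Polynomial.coeff_C_mul, Polynomial.coeff_X_pow]
    have hlt : vlmPot (f - t) < w := by
      rw [← hf, hμ]
      exact vlm_sub_ltP hμ hlmt hct.symm
    obtain ⟨u, huM, hu⟩ := IH _ hlt (f - t) rfl
    refine ⟨u, huM, fun ν hν => ?_⟩
    have : f - u = f - t - u + t := by ring
    rw [this]
    have h1 : mcoP (f - t - u + t) ν = mcoP (f - t - u) ν + mcoP t ν := by
      simp [mcoP, Pi.add_apply, Polynomial.coeff_add]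
    rw [h1, hu ν hν]
    have h2 : mcoP t ν = 0 := by
      rw [ht, mco_singleP]
      by_cases h3 : (ofLex ν).1 = (ofLex μ).1
      · rw [if_pos h3]
        simp only [Polynomial.coeff_C_mul, Polynomial.coeff_X_pow]
        rw [if_neg, mul_zero]
        intro h4
        have h5 := hν
        rw [h3, h4] at h5
        exact hdiv h5
      · rw [if_neg h3]
    rw [h2, add_zero]

/-- The leading monomial of a nonzero element of the span of the leading terms of the `g i`
is divisible by one of the leading monomials of the `g i`. -/
lemma top_lm_memP {n : ℕ} {g : Fin n → Fin q → F[X]} (lmg : Fin n → Lex (Fin q × ℕ))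
    (hlm : ∀ i, vlmPot (g i) = ((lmg i : Lex (Fin q × ℕ)) : WithBot (Lex (Fin q × ℕ))))
    {f : Fin q → F[X]} {μ : Lex (Fin q × ℕ)}
    (hf : vlmPot f = (μ : WithBot (Lex (Fin q × ℕ))))
    (hmem : vltPot f ∈ Submodule.span F[X] (Set.range (vltPot ∘ g))) :
    ∃ i, (ofLex (lmg i)).1 = (ofLex μ).1 ∧ (ofLex (lmg i)).2 ≤ (ofLex μ).2 := by
  obtain ⟨p, hp⟩ := (Submodule.mem_span_range_iff_exists_fun _).1 hmem
  have hcμ : mcoP f μ ≠ 0 := (vlm_eq_iffP.1 hf).1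
  have hltf : vltPot f (ofLex μ).1 = C (mcoP f μ) * X ^ (ofLex μ).2 := by
    rw [vlt_applyP hf, if_pos rfl]
  have hco : ((vltPot f) (ofLex μ).1).coeff (ofLex μ).2 ≠ 0 := by
    rw [hltf]
    simpa [Polynomial.coeff_C_mul, Polynomial.coeff_X_pow] using hcμ
  rw [← hp] at hco
  have hco2 : (∑ i, p i * (vltPot (g i) (ofLex μ).1)).coeff (ofLex μ).2 ≠ 0 := by
    rw [Finset.sum_apply] at hco
    exact hco
  rw [Polynomial.finset_sum_coeff] at hco2
  obtain ⟨i, _, hi⟩ := Finset.exists_ne_zero_of_sum_ne_zero hco2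
  have hposeq : (ofLex μ).1 = (ofLex (lmg i)).1 := by
    by_contra hpos
    apply hi
    rw [vlt_applyP (hlm i), if_neg hpos, mul_zero]
    simp
  refine ⟨i, hposeq.symm, ?_⟩
  by_contra hdeg
  apply hi
  rw [vlt_applyP (hlm i), if_pos hposeq]
  have hre : p i * (C (mcoP (g i) (lmg i)) * X ^ (ofLex (lmg i)).2) =
      C (mcoP (g i) (lmg i)) * p i * X ^ (ofLex (lmg i)).2 := by ring
  rw [hre, Polynomial.coeff_mul_X_pow', if_neg (by omega)]

end PotDivision

section PotBasisSec

variable {F : Type*} [Field F] {q : ℕ}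

/-- The standard monomials below the staircase `L`. -/
noncomputable def StdTP {q : ℕ} (L : Fin q → ℕ) : Finset (Lex (Fin q × ℕ)) :=
  Finset.univ.biUnion fun j => (Finset.range (L j)).image fun a => toLex (j, a)

lemma mem_StdTP {L : Fin q → ℕ} {μ : Lex (Fin q × ℕ)} :
    μ ∈ StdTP L ↔ (ofLex μ).2 < L (ofLex μ).1 := by
  simp only [StdTP, Finset.mem_biUnion, Finset.mem_univ, true_and, Finset.mem_image,
    Finset.mem_range]
  constructor
  · rintro ⟨j, a, ha, rfl⟩; exact ha
  · intro h; exact ⟨(ofLex μ).1, (ofLex μ).2, h, rfl⟩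

lemma card_StdTP (L : Fin q → ℕ) : (StdTP L).card = ∑ j, L j := by
  rw [StdTP, Finset.card_biUnion]
  · refine Finset.sum_congr rfl fun j _ => ?_
    rw [Finset.card_image_of_injective _ (fun a b h => ?_), Finset.card_range]
    exact congrArg (fun μ : Lex (Fin q × ℕ) => (ofLex μ).2) h
  · intro j _ k _ hjk
    rw [Function.onFun, Finset.disjoint_left]
    rintro μ hμ hμ'
    obtain ⟨a, _, rfl⟩ := Finset.mem_image.1 hμ
    obtain ⟨b, _, hb⟩ := Finset.mem_image.1 hμ'
    exact hjk (congrArg (fun μ : Lex (Fin q × ℕ) => (ofLex μ).1) hb.symm)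

lemma top_quot_basisP (M : Submodule F[X] (Fin q → F[X])) {n : ℕ} {g : Fin n → Fin q → F[X]}
    (hgM : ∀ i, g i ∈ M) (lmg : Fin n → Lex (Fin q × ℕ))
    (hlm : ∀ i, vlmPot (g i) = ((lmg i : Lex (Fin q × ℕ)) : WithBot (Lex (Fin q × ℕ))))
    (L : Fin q → ℕ) (hL : ∀ j, ∃ i, ofLex (lmg i) = (j, L j))
    (hLT : ∀ f : Fin q → F[X], f ∈ M → ∀ μ : Lex (Fin q × ℕ),
      vlmPot f = (μ : WithBot (Lex (Fin q × ℕ))) → L (ofLex μ).1 ≤ (ofLex μ).2) :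
    Nonempty (Module.Basis {μ // μ ∈ StdTP L} F ((Fin q → F[X]) ⧸ M.restrictScalars F)) := by
  set S := StdTP L with hS
  set mk := (M.restrictScalars F).mkQ with hmk
  set v : {μ // μ ∈ S} → ((Fin q → F[X]) ⧸ M.restrictScalars F) :=
    fun μ => mk (monoTP μ.1) with hv
  have hind : LinearIndependent F v := by
    rw [Fintype.linearIndependent_iff]
    intro c hc
    set cl : Lex (Fin q × ℕ) → F := fun ν => if h : ν ∈ S then c ⟨ν, h⟩ else 0 with hcl
    set r : Fin q → F[X] := ∑ μ ∈ S, cl μ • monoTP μ with hr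
    have hmco : ∀ ν, mcoP r ν = if ν ∈ S then cl ν else 0 := fun ν => mco_sum_monoP S cl ν
    have hmkr : mk r = 0 := by
      rw [hr, map_sum]
      have e1 : ∑ x ∈ S, mk (cl x • monoTP x) = ∑ x ∈ S, cl x • mk (monoTP x) :=
        Finset.sum_congr rfl fun x _ => map_smul mk (cl x) (monoTP x)
      rw [e1, ← Finset.sum_attach S (fun μ => cl μ • (mk (monoTP μ))), ← hc]
      refine Finset.sum_congr rfl fun μ _ => ?_
      congr 1
      exact dif_pos μ.2
    have hrM : r ∈ M := by
      have := (Submodule.Quotient.mk_eq_zero (M.restrictScalars F)).1 hmkr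
      exact this
    have hr0 : r = 0 := by
      by_contra hr0
      obtain ⟨μ₀, hμ₀, hco₀⟩ := exists_vlmP hr0
      have h1 := hLT r hrM μ₀ hμ₀
      have h2 : μ₀ ∈ S := by
        by_contra h2
        exact hco₀ (by rw [hmco, if_neg h2])
      rw [hS, mem_StdTP] at h2
      omega
    intro i
    have := hmco i.1
    rw [hr0, if_pos i.2] at this
    have hz : mcoP (0 : Fin q → F[X]) i.1 = 0 := by simp [mcoP, Pi.zero_apply]
    rw [hz] at this
    have : cl i.1 = 0 := this.symm
    rw [hcl] at this
    simpa [dif_pos i.2] using this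
  have hsp : ⊤ ≤ Submodule.span F (Set.range v) := by
    rintro x -
    obtain ⟨f, rfl⟩ := Submodule.mkQ_surjective (M.restrictScalars F) x
    obtain ⟨u, huM, hu⟩ := top_divisionP M hgM lmg hlm L hL f
    have hsupp : ∀ ν, ν ∉ S → mcoP (f - u) ν = 0 := by
      intro ν hν
      rw [hS, mem_StdTP] at hν
      exact hu ν (by omega)
    have hmkeq : mk f = mk (f - u) := by
      rw [hmk]
      rw [show f = (f - u) + u by ring, map_add]
      have : (M.restrictScalars F).mkQ u = 0 :=
        (Submodule.Quotient.mk_eq_zero _).2 huM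
      rw [this, add_zero]
      congr 1
      ring
    rw [hmkeq, repr_of_suppP hsupp, map_sum]
    rw [← Finset.sum_attach S (fun μ => mk (mcoP (f - u) μ • monoTP μ))]
    refine Submodule.sum_mem _ fun μ _ => ?_
    rw [map_smul]
    exact Submodule.smul_mem _ _ (Submodule.subset_span ⟨μ, rfl⟩)
  exact ⟨Module.Basis.mk hind hsp⟩

end PotBasisSec

section PotMinimal

variable {F : Type*} [Field F] {q : ℕ}

lemma top_pos_injP {n : ℕ} {M : Submodule F[X] (Fin q → F[X])} {g : Fin n → Fin q → F[X]}
    (hginj : Function.Injective g) (hgz : ∀ i, g i ≠ 0)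
    (hGB : IsMinimalGroebnerPot M (Finset.image g Finset.univ))
    (lmg : Fin n → Lex (Fin q × ℕ))
    (hlm : ∀ i, vlmPot (g i) = ((lmg i : Lex (Fin q × ℕ)) : WithBot (Lex (Fin q × ℕ)))) :
    Function.Injective fun i => (ofLex (lmg i)).1 := by
  have key : ∀ i k : Fin n, i ≠ k → (ofLex (lmg i)).1 = (ofLex (lmg k)).1 →
      (ofLex (lmg i)).2 ≤ (ofLex (lmg k)).2 → False := by
    intro i k hik hpos hdeg
    have hci : mcoP (g i) (lmg i) ≠ 0 := (vlm_eq_iffP.1 (hlm i)).1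
    have hck : mcoP (g k) (lmg k) ≠ 0 := (vlm_eq_iffP.1 (hlm k)).1
    set α := (ofLex (lmg k)).2 - (ofLex (lmg i)).2 with hα
    set β := mcoP (g k) (lmg k) / mcoP (g i) (lmg i) with hβ
    refine hGB.2 (g k) (Finset.mem_image.2 ⟨k, Finset.mem_univ k, rfl⟩)
      (g k - ∑ _t : Fin 1, (C β * X ^ α) • g i) ⟨hgz k, 1, (fun _ => g i), (fun _ => α),
      (fun _ => β), one_pos, ?_, fun _ => hgz i, fun a b _ => Subsingleton.elim a b,
      fun _ => div_ne_zero hck hci, ?_, ?_, rfl⟩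
    · intro t
      exact Finset.mem_erase.2 ⟨fun h => hik (hginj h),
        Finset.mem_image.2 ⟨i, Finset.mem_univ i, rfl⟩⟩
    · intro t
      rw [hlm i, hlm k, WithBot.map_coe, WithBot.coe_eq_coe]
      show toLex (ofLex (lmg k)) = toLex ((ofLex (lmg i)).1, α + (ofLex (lmg i)).2)
      congr 1
      refine Prod.ext hpos.symm ?_
      show (ofLex (lmg k)).2 = α + (ofLex (lmg i)).2
      omega
    · rw [Fin.sum_univ_one]
      funext j
      rw [vlt_applyP (hlm k), Pi.smul_apply, vlt_applyP (hlm i), smul_eq_mul]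
      rw [← hpos]
      by_cases hj : j = (ofLex (lmg i)).1
      · rw [if_pos hj, if_pos hj]
        rw [show C β * X ^ α * (C (mcoP (g i) (lmg i)) * X ^ (ofLex (lmg i)).2) =
          C (β * mcoP (g i) (lmg i)) * X ^ (α + (ofLex (lmg i)).2) by
            rw [C_mul, pow_add]; ring]
        rw [hβ, div_mul_cancel₀ _ hci]
        have he : α + (ofLex (lmg i)).2 = (ofLex (lmg k)).2 := by omega
        rw [he]
      · rw [if_neg hj, if_neg hj, mul_zero]
  intro i k h
  by_contra hne
  rcases le_total (ofLex (lmg i)).2 (ofLex (lmg k)).2 with hle | hle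
  · exact key i k hne h hle
  · exact key k i (Ne.symm hne) h.symm hle

end PotMinimal
/-- For a full-rank submodule `M ⊆ F[x]^q`, the sum of the degrees of a minimal Gröbner basis
w.r.t. the top ordering equals the sum of the degrees of a minimal Gröbner basis w.r.t. the
pot ordering. -/
theorem sum_deg_top_eq_sum_deg_pot {F : Type*} [Field F] {q m : ℕ}
    (M : Submodule (Polynomial F) (Fin q → Polynomial F))
    (hrank : Module.rank (Polynomial F) ↥M = q)
    (g : Fin m → Fin q → Polynomial F) (hginj : Function.Injective g) (hgz : ∀ i, g i ≠ 0)
    (hGB : IsMinimalGroebner M (Finset.image g Finset.univ))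
    (gt : Fin m → Fin q → Polynomial F) (hgtinj : Function.Injective gt) (hgtz : ∀ i, gt i ≠ 0)
    (hGBt : IsMinimalGroebnerPot M (Finset.image gt Finset.univ)) :
    ∑ i, vdeg (g i) = ∑ i, vdegPot (gt i) := by
  classical
  -- Top side
  choose lmg hlmg hlmc using fun i => exists_vlm (hgz i)
  have hposinj := top_pos_inj hginj hgz hGB lmg hlmg
  have hgM : ∀ i, g i ∈ M := fun i =>
    hGB.1.1 (Finset.mem_coe.2 (Finset.mem_image.2 ⟨i, Finset.mem_univ i, rfl⟩))
  have hmemLT : ∀ f : Fin q → Polynomial F, f ∈ M → ∀ μ : Lex (ℕ × Fin q),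
      vlm f = (μ : WithBot (Lex (ℕ × Fin q))) →
      ∃ i, (ofLex (lmg i)).2 = (ofLex μ).2 ∧ (ofLex (lmg i)).1 ≤ (ofLex μ).1 := by
    intro f hf μ hμ
    refine top_lm_mem lmg hlmg hμ ?_
    have h1 : vlt f ∈ ltSubmodule
        ((Finset.image g Finset.univ : Finset (Fin q → Polynomial F)) :
          Set (Fin q → Polynomial F)) := by
      rw [hGB.1.2]
      exact Submodule.subset_span ⟨f, hf, rfl⟩
    have h2 : vlt '' ((Finset.image g Finset.univ : Finset (Fin q → Polynomial F)) :
        Set (Fin q → Polynomial F)) = Set.range (vlt ∘ g) := by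
      rw [Finset.coe_image, Finset.coe_univ, Set.image_univ, ← Set.range_comp]
    rwa [ltSubmodule, h2] at h1
  have hpossurj : ∀ j : Fin q, ∃ i, (ofLex (lmg i)).2 = j := by
    intro j
    obtain ⟨p, hp, hpM⟩ := exists_single_mem M hrank j
    obtain ⟨i, hi, _⟩ := hmemLT _ hpM (toLex (p.natDegree, j)) (vlm_single hp j)
    exact ⟨i, hi⟩
  have hbij : Function.Bijective fun i => (ofLex (lmg i)).2 := ⟨hposinj, hpossurj⟩
  let e : Fin m ≃ Fin q := Equiv.ofBijective _ hbij
  let L : Fin q → ℕ := fun j => (ofLex (lmg (e.symm j))).1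
  have hLspec : ∀ j, ofLex (lmg (e.symm j)) = (L j, j) := by
    intro j
    refine Prod.ext rfl ?_
    show (ofLex (lmg (e.symm j))).2 = j
    exact e.apply_symm_apply j
  have hLT : ∀ f : Fin q → Polynomial F, f ∈ M → ∀ μ : Lex (ℕ × Fin q),
      vlm f = (μ : WithBot (Lex (ℕ × Fin q))) → L (ofLex μ).2 ≤ (ofLex μ).1 := by
    intro f hf μ hμ
    obtain ⟨i, hi1, hi2⟩ := hmemLT f hf μ hμ
    have hsi : e.symm (ofLex μ).2 = i := by
      rw [← hi1]
      exact e.symm_apply_apply i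
    show (ofLex (lmg (e.symm (ofLex μ).2))).1 ≤ (ofLex μ).1
    rw [hsi]
    exact hi2
  obtain ⟨b⟩ := top_quot_basis M hgM lmg hlmg L (fun j => ⟨e.symm j, hLspec j⟩) hLT
  -- Pot side
  choose lmgt hlmgt hlmct using fun i => exists_vlmP (hgtz i)
  have hposinjt := top_pos_injP hgtinj hgtz hGBt lmgt hlmgt
  have hgMt : ∀ i, gt i ∈ M := fun i =>
    hGBt.1.1 (Finset.mem_coe.2 (Finset.mem_image.2 ⟨i, Finset.mem_univ i, rfl⟩))
  have hmemLTt : ∀ f : Fin q → Polynomial F, f ∈ M → ∀ μ : Lex (Fin q × ℕ),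
      vlmPot f = (μ : WithBot (Lex (Fin q × ℕ))) →
      ∃ i, (ofLex (lmgt i)).1 = (ofLex μ).1 ∧ (ofLex (lmgt i)).2 ≤ (ofLex μ).2 := by
    intro f hf μ hμ
    refine top_lm_memP lmgt hlmgt hμ ?_
    have h1 : vltPot f ∈ ltSubmodulePot
        ((Finset.image gt Finset.univ : Finset (Fin q → Polynomial F)) :
          Set (Fin q → Polynomial F)) := by
      rw [hGBt.1.2]
      exact Submodule.subset_span ⟨f, hf, rfl⟩
    have h2 : vltPot '' ((Finset.image gt Finset.univ : Finset (Fin q → Polynomial F)) :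
        Set (Fin q → Polynomial F)) = Set.range (vltPot ∘ gt) := by
      rw [Finset.coe_image, Finset.coe_univ, Set.image_univ, ← Set.range_comp]
    rwa [ltSubmodulePot, h2] at h1
  have hpossurjt : ∀ j : Fin q, ∃ i, (ofLex (lmgt i)).1 = j := by
    intro j
    obtain ⟨p, hp, hpM⟩ := exists_single_mem M hrank j
    obtain ⟨i, hi, _⟩ := hmemLTt _ hpM (toLex (j, p.natDegree)) (vlm_singleP hp j)
    exact ⟨i, hi⟩
  have hbijt : Function.Bijective fun i => (ofLex (lmgt i)).1 := ⟨hposinjt, hpossurjt⟩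
  let et : Fin m ≃ Fin q := Equiv.ofBijective _ hbijt
  let Lt : Fin q → ℕ := fun j => (ofLex (lmgt (et.symm j))).2
  have hLspect : ∀ j, ofLex (lmgt (et.symm j)) = (j, Lt j) := by
    intro j
    refine Prod.ext ?_ rfl
    show (ofLex (lmgt (et.symm j))).1 = j
    exact et.apply_symm_apply j
  have hLTt : ∀ f : Fin q → Polynomial F, f ∈ M → ∀ μ : Lex (Fin q × ℕ),
      vlmPot f = (μ : WithBot (Lex (Fin q × ℕ))) → Lt (ofLex μ).1 ≤ (ofLex μ).2 := by
    intro f hf μ hμ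
    obtain ⟨i, hi1, hi2⟩ := hmemLTt f hf μ hμ
    have hsi : et.symm (ofLex μ).1 = i := by
      rw [← hi1]
      exact et.symm_apply_apply i
    show (ofLex (lmgt (et.symm (ofLex μ).1))).2 ≤ (ofLex μ).2
    rw [hsi]
    exact hi2
  obtain ⟨bt⟩ := top_quot_basisP M hgMt lmgt hlmgt Lt (fun j => ⟨et.symm j, hLspect j⟩) hLTt
  -- Compare cardinalities via the two bases of the same quotient
  have hcard : (StdT L).card = (StdTP Lt).card := by
    have hcc := Fintype.card_congr (b.indexEquiv bt)
    simpa [Fintype.card_coe] using hcc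
  have h1 : ∑ i, vdeg (g i) = ∑ j, L j := by
    rw [Finset.sum_congr rfl fun i _ => vdeg_eq (hlmg i)]
    exact (Equiv.sum_comp e.symm fun i => (ofLex (lmg i)).1).symm
  have h2 : ∑ i, vdegPot (gt i) = ∑ j, Lt j := by
    rw [Finset.sum_congr rfl fun i _ => vdeg_eqP (hlmgt i)]
    exact (Equiv.sum_comp et.symm fun i => (ofLex (lmgt i)).2).symm
  rw [h1, h2, ← card_StdT L, ← card_StdTP Lt, hcard]
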